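/- Let T be a ranked Safra tree with n nodes, and list its nodes in depth-first post-order as v₁, …, vₙ. Then vₙ is the root of T, and for every i < n the parent of vᵢ is v_j where j = min{k | i < k ≤ n and rk(v_k) < rk(vᵢ)}; moreover, if vᵢ is the left sibling of v_{j}, then i < j. -/

import Mathlib

universe u

/-- A finite ordered rooted tree, each node carrying a label (a subset of `Q`) and a
rank (a natural number); the children lists give the sibling order. -/
inductive OTree (Q : Type u) : Type u where
  | node : Set Q → ℕ → List (OTree Q) → OTree Q

namespace OTree

variable {Q : Type u}

/-- Label of the root node. -/
def rootLabel : OTree Q → Set Q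
  | node S _ _ => S

/-- Rank of the root node. -/
def rootRank : OTree Q → ℕ
  | node _ r _ => r

mutual
  /-- Depth-first post-order listing of the (label, rank) pairs of all nodes. -/
  def postorder : OTree Q → List (Set Q × ℕ)
    | .node S r cs => postorderL cs ++ [(S, r)]
  def postorderL : List (OTree Q) → List (Set Q × ℕ)
    | [] => []
    | t :: ts => postorder t ++ postorderL ts
end

/-- The labels of all nodes, in post-order. -/
def labels (t : OTree Q) : List (Set Q) := (postorder t).map Prod.fst

/-- The ranks of all nodes, in post-order. -/
def ranks (t : OTree Q) : List ℕ := (postorder t).map Prod.snd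

/-- Number of nodes. -/
def size (t : OTree Q) : ℕ := (postorder t).length

mutual
  /-- Each parent has a smaller rank than each of its children, and the ranks of the
  children of any node strictly increase from left to right. -/
  def RanksOK : OTree Q → Prop
    | .node _ r cs =>
        (cs.map rootRank).Pairwise (· < ·) ∧ (∀ c ∈ cs, r < rootRank c) ∧ RanksOKL cs
  def RanksOKL : List (OTree Q) → Prop
    | [] => True
    | t :: ts => RanksOK t ∧ RanksOKL ts
end

/-- A valid ranked Safra tree: nonempty pairwise disjoint labels, the ranks form a
bijection onto `{1,…,n}`, a parent's rank is smaller than its children's ranks and the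
sibling order agrees with the rank order. -/
def IsRankedSafraTree (t : OTree Q) : Prop :=
  (∀ S ∈ labels t, S.Nonempty) ∧ (labels t).Pairwise Disjoint ∧
  (ranks t).Perm (List.range' 1 (size t)) ∧ RanksOK t

end OTree

namespace OTree

variable {Q : Type u}

mutual
  /-- The (child rank, parent rank) pairs of all edges of the tree.  Since the ranks of
  a ranked Safra tree are a bijection onto `{1,…,n}`, nodes are faithfully identified
  by their ranks. -/
  def edges : OTree Q → List (ℕ × ℕ)
    | .node _ r cs => cs.map (fun c => (rootRank c, r)) ++ edgesL cs
  def edgesL : List (OTree Q) → List (ℕ × ℕ)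
    | [] => []
    | t :: ts => edges t ++ edgesL ts
end

/-- Adjacent pairs of a list. -/
def adjPairs (l : List ℕ) : List (ℕ × ℕ) := l.zip l.tail

mutual
  /-- The (left sibling rank, right sibling rank) pairs of all pairs of adjacent
  siblings of the tree. -/
  def sibEdges : OTree Q → List (ℕ × ℕ)
    | .node _ _ cs => adjPairs (cs.map rootRank) ++ sibEdgesL cs
  def sibEdgesL : List (OTree Q) → List (ℕ × ℕ)
    | [] => []
    | t :: ts => sibEdges t ++ sibEdgesL ts
end

end OTree

namespace OTree

variable {Q : Type u}

/-- Ranks of a forest, in post-order. -/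
def ranksL (cs : List (OTree Q)) : List ℕ := (postorderL cs).map Prod.snd

lemma ranks_node (S : Set Q) (r : ℕ) (cs : List (OTree Q)) :
    ranks (node S r cs) = ranksL cs ++ [r] := by
  rw [ranks, postorder]; simp [ranksL]

lemma ranksL_nil : ranksL ([] : List (OTree Q)) = [] := by
  rw [ranksL, postorderL]; rfl

lemma ranksL_cons (t : OTree Q) (ts : List (OTree Q)) :
    ranksL (t :: ts) = ranks t ++ ranksL ts := by
  rw [ranksL, postorderL]; simp [ranks, ranksL]

lemma ranks_ne_nil (t : OTree Q) : ranks t ≠ [] := by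
  cases t with
  | node S r cs => rw [ranks_node]; simp

lemma mem_ranksL {x : ℕ} {cs : List (OTree Q)} :
    x ∈ ranksL cs ↔ ∃ c ∈ cs, x ∈ ranks c := by
  induction cs with
  | nil => simp [ranksL_nil]
  | cons c ts ih => simp [ranksL_cons, ih]

lemma rootRank_mem (t : OTree Q) : rootRank t ∈ ranks t := by
  cases t with
  | node S r cs => rw [ranks_node, rootRank]; simp

lemma getD_last (l : List ℕ) (r : ℕ) : (l ++ [r]).getD l.length 0 = r := by
  rw [List.getD_append_right _ _ _ _ le_rfl]
  simp

lemma ranks_getD_last (t : OTree Q) :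
    (ranks t).getD ((ranks t).length - 1) 0 = rootRank t := by
  cases t with
  | node S r cs =>
      rw [ranks_node, rootRank]
      have : (ranksL cs ++ [r]).length - 1 = (ranksL cs).length := by simp
      rw [this, getD_last]

lemma ranksOK_of_mem {cs : List (OTree Q)} {c : OTree Q}
    (h : RanksOKL cs) (hc : c ∈ cs) : RanksOK c := by
  induction cs with
  | nil => simp at hc
  | cons d ts ih =>
      rw [RanksOKL] at h
      rcases List.mem_cons.1 hc with rfl | hc
      · exact h.1
      · exact ih h.2 hc

theorem rootRank_le : ∀ (t : OTree Q), RanksOK t → ∀ x ∈ ranks t, rootRank t ≤ x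
  | node S r cs => by
    intro h x hx
    rw [RanksOK] at h
    rw [ranks_node] at hx
    rw [rootRank]
    rcases List.mem_append.1 hx with hx | hx
    · rcases mem_ranksL.1 hx with ⟨c, hc, hxc⟩
      have hlt : sizeOf c < sizeOf (node S r cs) := by
        have := List.sizeOf_lt_of_mem hc
        cases c <;> simp_all <;> omega
      have h1 : RanksOK c := ranksOK_of_mem h.2.2 hc
      exact le_of_lt (lt_of_lt_of_le (h.2.1 c hc) (rootRank_le c h1 x hxc))
    · simp at hx; omega
termination_by t => sizeOf t
decreasing_by exact hlt

lemma rootRank_lt_ranksL {S : Set Q} {r : ℕ} {cs : List (OTree Q)}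
    (h : RanksOK (node S r cs)) : ∀ x ∈ ranksL cs, r < x := by
  rw [RanksOK] at h
  intro x hx
  rcases mem_ranksL.1 hx with ⟨c, hc, hxc⟩
  exact lt_of_lt_of_le (h.2.1 c hc) (rootRank_le c (ranksOK_of_mem h.2.2 hc) x hxc)

end OTree

namespace OTree

variable {Q : Type u}

lemma getD_mem' {l : List ℕ} {i : ℕ} (h : i < l.length) : l.getD i 0 ∈ l := by
  rw [List.getD_eq_getElem _ _ h]; exact List.getElem_mem _

mutual
theorem mainFact : ∀ (t : OTree Q), RanksOK t → ∀ p, p + 1 < (ranks t).length →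
    ∃ j, p < j ∧ j < (ranks t).length ∧
      (ranks t).getD j 0 < (ranks t).getD p 0 ∧
      (∀ k, p < k → k < j → (ranks t).getD p 0 < (ranks t).getD k 0) ∧
      ((ranks t).getD p 0, (ranks t).getD j 0) ∈ edges t
  | node S r cs => by
    intro h p hp
    rw [RanksOK] at h
    rw [ranks_node] at hp ⊢
    rw [edges]
    have hp' : p < (ranksL cs).length := by simp at hp; omega
    obtain ⟨j, hpj, hjle, hlt, hbet, hset⟩ := mainFactL cs r h.2.2 h.2.1 h.1 p hp'
    refine ⟨j, hpj, by simp; omega, hlt, hbet, ?_⟩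
    rcases hset with hmem | ⟨hj, hmem⟩
    · exact List.mem_append_right _ hmem
    · subst hj
      rw [getD_last]
      rcases List.mem_map.1 hmem with ⟨c, hc, hcr⟩
      exact List.mem_append_left _ (List.mem_map.2 ⟨c, hc, by rw [hcr]⟩)
termination_by t => sizeOf t

theorem mainFactL : ∀ (cs : List (OTree Q)) (r : ℕ), RanksOKL cs →
    (∀ c ∈ cs, r < rootRank c) → (cs.map rootRank).Pairwise (· < ·) →
    ∀ p, p < (ranksL cs).length →
    ∃ j, p < j ∧ j ≤ (ranksL cs).length ∧
      (ranksL cs ++ [r]).getD j 0 < (ranksL cs ++ [r]).getD p 0 ∧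
      (∀ k, p < k → k < j →
        (ranksL cs ++ [r]).getD p 0 < (ranksL cs ++ [r]).getD k 0) ∧
      (((ranksL cs ++ [r]).getD p 0, (ranksL cs ++ [r]).getD j 0) ∈ edgesL cs ∨
        (j = (ranksL cs).length ∧ (ranksL cs ++ [r]).getD p 0 ∈ cs.map rootRank))
  | [], r => by
    intro _ _ _ p hp
    rw [ranksL_nil] at hp; simp at hp
  | c :: ts, r => by
    intro h hr hpw p hp
    rw [RanksOKL] at h
    rw [List.map_cons, List.pairwise_cons] at hpw
    rw [ranksL_cons] at hp ⊢
    have hlc1 : 0 < (ranks c).length := List.length_pos_iff.2 (ranks_ne_nil c)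
    have hlen : (ranks c ++ ranksL ts).length
        = (ranks c).length + (ranksL ts).length := List.length_append
    rw [List.length_append] at hp
    by_cases hA : p + 1 < (ranks c).length
    · obtain ⟨j, hpj, hjlt, hlt, hbet, hmem⟩ := mainFact c h.1 p hA
      have ep : ((ranks c ++ ranksL ts) ++ [r]).getD p 0 = (ranks c).getD p 0 := by
        rw [List.getD_append _ _ _ _ (by rw [hlen]; omega),
          List.getD_append _ _ _ _ (by omega)]
      have ej : ((ranks c ++ ranksL ts) ++ [r]).getD j 0 = (ranks c).getD j 0 := by
        rw [List.getD_append _ _ _ _ (by rw [hlen]; omega),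
          List.getD_append _ _ _ _ (by omega)]
      refine ⟨j, hpj, by rw [hlen]; omega, ?_, ?_, ?_⟩
      · rw [ep, ej]; exact hlt
      · intro k hk1 hk2
        have ek : ((ranks c ++ ranksL ts) ++ [r]).getD k 0 = (ranks c).getD k 0 := by
          rw [List.getD_append _ _ _ _ (by rw [hlen]; omega),
            List.getD_append _ _ _ _ (by omega)]
        rw [ep, ek]; exact hbet k hk1 hk2
      · left
        rw [edgesL]
        exact List.mem_append_left _ (by rw [ep, ej]; exact hmem)
    · by_cases hB : p + 1 = (ranks c).length
      · have ep : ((ranks c ++ ranksL ts) ++ [r]).getD p 0 = rootRank c := by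
          rw [List.getD_append _ _ _ _ (by rw [hlen]; omega),
            List.getD_append _ _ _ _ (by omega),
            show p = (ranks c).length - 1 by omega, ranks_getD_last]
        have er : ((ranks c ++ ranksL ts) ++ [r]).getD
            (ranks c ++ ranksL ts).length 0 = r := getD_last _ _
        refine ⟨(ranks c ++ ranksL ts).length, by rw [hlen]; omega, le_rfl, ?_, ?_, ?_⟩
        · rw [ep, er]; exact hr c List.mem_cons_self
        · intro k hk1 hk2
          rw [ep]
          have hk3 : (ranks c).length ≤ k := by omega
          have ek : ((ranks c ++ ranksL ts) ++ [r]).getD k 0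
              = (ranksL ts).getD (k - (ranks c).length) 0 := by
            rw [List.getD_append _ _ _ _ hk2, List.getD_append_right _ _ _ _ hk3]
          rw [ek]
          have hkl : k - (ranks c).length < (ranksL ts).length := by
            rw [hlen] at hk2; omega
          rcases mem_ranksL.1 (getD_mem' hkl) with ⟨d, hd, hxd⟩
          have h1 : rootRank c < rootRank d := hpw.1 _ (List.mem_map.2 ⟨d, hd, rfl⟩)
          exact lt_of_lt_of_le h1 (rootRank_le d (ranksOK_of_mem h.2 hd) _ hxd)
        · right
          exact ⟨rfl, by rw [ep]; exact List.mem_map.2 ⟨c, List.mem_cons_self, rfl⟩⟩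
      · have hlcp : (ranks c).length ≤ p := by omega
        have hp2 : p - (ranks c).length < (ranksL ts).length := by omega
        obtain ⟨j, hpj, hjle, hlt, hbet, hmem⟩ :=
          mainFactL ts r h.2 (fun d hd => hr d (List.mem_cons_of_mem c hd)) hpw.2
            (p - (ranks c).length) hp2
        have ep : ((ranks c ++ ranksL ts) ++ [r]).getD p 0
            = (ranksL ts ++ [r]).getD (p - (ranks c).length) 0 := by
          rw [List.append_assoc, List.getD_append_right _ _ _ _ hlcp]
        have ej : ((ranks c ++ ranksL ts) ++ [r]).getD ((ranks c).length + j) 0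
            = (ranksL ts ++ [r]).getD j 0 := by
          rw [List.append_assoc,
            List.getD_append_right _ _ _ _ (Nat.le_add_right _ _),
            Nat.add_sub_cancel_left]
        refine ⟨(ranks c).length + j, by omega, by rw [hlen]; omega, ?_, ?_, ?_⟩
        · rw [ep, ej]; exact hlt
        · intro k hk1 hk2
          have hk3 : (ranks c).length ≤ k := by omega
          have ek : ((ranks c ++ ranksL ts) ++ [r]).getD k 0
              = (ranksL ts ++ [r]).getD (k - (ranks c).length) 0 := by
            rw [List.append_assoc, List.getD_append_right _ _ _ _ hk3]
          rw [ep, ek]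
          exact hbet (k - (ranks c).length) (by omega) (by omega)
        · rcases hmem with hmem | ⟨hj, hmem⟩
          · left
            rw [edgesL]
            exact List.mem_append_right _ (by rw [ep, ej]; exact hmem)
          · right
            refine ⟨by rw [hlen, hj], ?_⟩
            rw [ep, List.map_cons]
            exact List.mem_cons_of_mem _ hmem
termination_by cs _ => sizeOf cs
end

end OTree

namespace OTree

variable {Q : Type u}

lemma adjPairs_cons_cons (x y : ℕ) (l : List ℕ) :
    adjPairs (x :: y :: l) = (x, y) :: adjPairs (y :: l) := rfl

mutual
theorem sibSplit : ∀ (t : OTree Q) (a b : ℕ), (a, b) ∈ sibEdges t →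
    ∃ l1 l2, ranks t = l1 ++ l2 ∧ a ∈ l1 ∧ b ∈ l2
  | node S r cs => by
    intro a b hab
    rw [sibEdges] at hab
    obtain ⟨l1, l2, he, ha, hb⟩ := sibSplitL cs a b hab
    exact ⟨l1, l2 ++ [r], by rw [ranks_node, he, List.append_assoc], ha,
      List.mem_append_left _ hb⟩
termination_by t => sizeOf t

theorem sibSplitL : ∀ (cs : List (OTree Q)) (a b : ℕ),
    (a, b) ∈ adjPairs (cs.map rootRank) ++ sibEdgesL cs →
    ∃ l1 l2, ranksL cs = l1 ++ l2 ∧ a ∈ l1 ∧ b ∈ l2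
  | [] => by
    intro a b hab
    rw [sibEdgesL] at hab
    simp [adjPairs] at hab
  | c :: ts => by
    intro a b hab
    rw [sibEdgesL, List.map_cons] at hab
    rcases List.mem_append.1 hab with hadj | hse
    · cases ts with
      | nil => simp [adjPairs] at hadj
      | cons d ts' =>
        rw [List.map_cons, adjPairs_cons_cons] at hadj
        rcases List.mem_cons.1 hadj with heq | hadj'
        · rw [Prod.mk.injEq] at heq
          obtain ⟨rfl, rfl⟩ := heq
          refine ⟨ranks c, ranksL (d :: ts'), by rw [ranksL_cons], rootRank_mem c, ?_⟩
          rw [ranksL_cons]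
          exact List.mem_append_left _ (rootRank_mem d)
        · obtain ⟨l1, l2, he, ha, hb⟩ := sibSplitL (d :: ts') a b
            (List.mem_append_left _ (by rw [List.map_cons]; exact hadj'))
          exact ⟨ranks c ++ l1, l2, by rw [ranksL_cons, he, List.append_assoc],
            List.mem_append_right _ ha, hb⟩
    · rcases List.mem_append.1 hse with h1 | h2
      · obtain ⟨l1, l2, he, ha, hb⟩ := sibSplit c a b h1
        exact ⟨l1, l2 ++ ranksL ts, by rw [ranksL_cons, he, List.append_assoc], ha,
          List.mem_append_left _ hb⟩
      · obtain ⟨l1, l2, he, ha, hb⟩ := sibSplitL ts a b (List.mem_append_right _ h2)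
        exact ⟨ranks c ++ l1, l2, by rw [ranksL_cons, he, List.append_assoc],
          List.mem_append_right _ ha, hb⟩
termination_by cs => sizeOf cs
end

end OTree

open OTree in
/-- Let `t` be a ranked Safra tree with `n` nodes `v₁, …, vₙ` listed in
depth-first post-order (identified below by their ranks `ranks t`, since the ranking is
a bijection).  Then `vₙ` is the root, for every `1 ≤ i < n` the parent of `vᵢ` is `vⱼ`
with `j = min {k | i < k ≤ n ∧ rk v_k < rk vᵢ}`, and if `vᵢ` is the left sibling of
`vⱼ` then `i < j` (positions being recovered via `List.indexOf` into `ranks t`). -/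
theorem postorder_parent_characterization (Q : Type u) (t : OTree Q)
    (h : IsRankedSafraTree t) :
    (ranks t).getD (size t - 1) 0 = rootRank t ∧
    (∀ i, 1 ≤ i → i < size t →
      ((ranks t).getD (i - 1) 0,
        (ranks t).getD
          (sInf {k | i < k ∧ k ≤ size t ∧
            (ranks t).getD (k - 1) 0 < (ranks t).getD (i - 1) 0} - 1) 0) ∈ edges t) ∧
    (∀ a b, (a, b) ∈ sibEdges t → (ranks t).idxOf a < (ranks t).idxOf b) := by
  obtain ⟨hne, hdisj, hperm, hok⟩ := h
  have hnd : (ranks t).Nodup := hperm.nodup_iff.mpr (List.nodup_range' (s := 1) (n := size t) 1 one_pos)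
  have hsz : size t = (ranks t).length := by rw [ranks, List.length_map]; rfl
  refine ⟨by rw [hsz]; exact ranks_getD_last t, ?_, ?_⟩
  · intro i h1 h2
    rw [hsz] at h2
    have hp : (i - 1) + 1 < (ranks t).length := by omega
    obtain ⟨j, hpj, hjlt, hlt, hbet, hmem⟩ := mainFact t hok (i - 1) hp
    have hmemS : j + 1 ∈ {k | i < k ∧ k ≤ size t ∧
        (ranks t).getD (k - 1) 0 < (ranks t).getD (i - 1) 0} := by
      refine ⟨by omega, by omega, ?_⟩
      simpa using hlt
    have hinf : sInf {k | i < k ∧ k ≤ size t ∧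
        (ranks t).getD (k - 1) 0 < (ranks t).getD (i - 1) 0} = j + 1 := by
      refine le_antisymm (Nat.sInf_le hmemS) (le_csInf ⟨_, hmemS⟩ ?_)
      rintro k ⟨hk1, hk2, hk3⟩
      by_contra hcon
      push_neg at hcon
      have := hbet (k - 1) (by omega) (by omega)
      omega
    rw [hinf]
    simpa using hmem
  · intro a b hab
    obtain ⟨l1, l2, he, ha, hb⟩ := sibSplit t a b hab
    rw [he] at hnd ⊢
    have hbnl : b ∉ l1 := fun hbl => (List.nodup_append.1 hnd).2.2 b hbl b hb rfl
    rw [List.idxOf_append_of_mem ha, List.idxOf_append_of_notMem hbnl]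
    have := List.idxOf_lt_length_iff.2 ha
    omega
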